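/- Let A, Ω, θ : ℝ → ℝ and L, V, y : ℝ → ℝ² be differentiable, let R(t) be the 2×2 rotation matrix by angle θ(t), and assume for all t: A'(t) = −(V₁(t)·L₂(t) − V₂(t)·L₁(t)), L'(t) = −Ω(t)·J(L(t)), θ'(t) = Ω(t), and y'(t) = R(t)·V(t). Define the spatial momentum ℓ(t) = R(t)·L(t) and a(t) = A(t) + y₁(t)·ℓ₂(t) − y₂(t)·ℓ₁(t). Then ℓ and a are constant. -/

import Mathlib

/- For a single planar rigid body obeying the Kirchhoff equations Ȧ + V × L = 0,
   L̇ + Ω × L = 0 together with the reconstruction equations θ̇ = Ω, ẏ = R·V, the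
   spatial momentum (a, ℓ) = (A + y × RL, RL) is conserved. -/

open Matrix

/-- The 2×2 rotation matrix by angle θ. -/
noncomputable def rot (θ : ℝ) : Matrix (Fin 2) (Fin 2) ℝ :=
  !![Real.cos θ, -Real.sin θ; Real.sin θ, Real.cos θ]

/-- Counterclockwise rotation by π/2: J(x₁,x₂) = (−x₂,x₁). -/
def Jv (v : Fin 2 → ℝ) : Fin 2 → ℝ := ![-v 1, v 0]

theorem spatial_momentum_conserved
    (A Ω θ : ℝ → ℝ) (L V y : ℝ → Fin 2 → ℝ)
    (hA : Differentiable ℝ A) (hΩ : Differentiable ℝ Ω) (hθ : Differentiable ℝ θ)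
    (hL : Differentiable ℝ L) (hV : Differentiable ℝ V) (hy : Differentiable ℝ y)
    (hKirA : ∀ t, deriv A t = -(V t 0 * L t 1 - V t 1 * L t 0))
    (hKirL : ∀ t, deriv L t = -(Ω t) • Jv (L t))
    (hθ' : ∀ t, deriv θ t = Ω t)
    (hy' : ∀ t, deriv y t = (rot (θ t)).mulVec (V t)) :
    ∀ t₁ t₂ : ℝ,
      (rot (θ t₁)).mulVec (L t₁) = (rot (θ t₂)).mulVec (L t₂)
        ∧ A t₁ + y t₁ 0 * (rot (θ t₁)).mulVec (L t₁) 1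
            - y t₁ 1 * (rot (θ t₁)).mulVec (L t₁) 0
          = A t₂ + y t₂ 0 * (rot (θ t₂)).mulVec (L t₂) 1
            - y t₂ 1 * (rot (θ t₂)).mulVec (L t₂) 0 := by
  -- component derivative facts
  have hLd : ∀ t, HasDerivAt L (-(Ω t) • Jv (L t)) t := fun t =>
    hKirL t ▸ (hL t).hasDerivAt
  have hL0 : ∀ t, HasDerivAt (fun t => L t 0) (Ω t * L t 1) t := by
    intro t
    have := (hasDerivAt_pi.1 (hLd t)) 0
    simpa [Jv] using this
  have hL1 : ∀ t, HasDerivAt (fun t => L t 1) (-(Ω t) * L t 0) t := by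
    intro t
    have := (hasDerivAt_pi.1 (hLd t)) 1
    simpa [Jv] using this
  have hθd : ∀ t, HasDerivAt θ (Ω t) t := fun t => hθ' t ▸ (hθ t).hasDerivAt
  have hc : ∀ t, HasDerivAt (fun t => Real.cos (θ t)) (-Real.sin (θ t) * Ω t) t :=
    fun t => (Real.hasDerivAt_cos (θ t)).comp t (hθd t)
  have hs : ∀ t, HasDerivAt (fun t => Real.sin (θ t)) (Real.cos (θ t) * Ω t) t :=
    fun t => (Real.hasDerivAt_sin (θ t)).comp t (hθd t)
  have hyd : ∀ t, HasDerivAt y ((rot (θ t)).mulVec (V t)) t := fun t =>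
    hy' t ▸ (hy t).hasDerivAt
  have hy0 : ∀ t, HasDerivAt (fun t => y t 0)
      (Real.cos (θ t) * V t 0 - Real.sin (θ t) * V t 1) t := by
    intro t
    have := (hasDerivAt_pi.1 (hyd t)) 0
    simpa [rot, Matrix.mulVec, dotProduct, Fin.sum_univ_two, sub_eq_add_neg] using this
  have hy1 : ∀ t, HasDerivAt (fun t => y t 1)
      (Real.sin (θ t) * V t 0 + Real.cos (θ t) * V t 1) t := by
    intro t
    have := (hasDerivAt_pi.1 (hyd t)) 1
    simpa [rot, Matrix.mulVec, dotProduct, Fin.sum_univ_two] using this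
  set f0 : ℝ → ℝ := fun t => Real.cos (θ t) * L t 0 - Real.sin (θ t) * L t 1 with hf0def
  set f1 : ℝ → ℝ := fun t => Real.sin (θ t) * L t 0 + Real.cos (θ t) * L t 1 with hf1def
  have hf0 : ∀ t, HasDerivAt f0 0 t := by
    intro t
    have h := ((hc t).mul (hL0 t)).sub ((hs t).mul (hL1 t))
    convert h using 1
    · rfl
    · rfl
    · rfl
    ring
  have hf1 : ∀ t, HasDerivAt f1 0 t := by
    intro t
    have h := ((hs t).mul (hL0 t)).add ((hc t).mul (hL1 t))
    convert h using 1
    · rfl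
    · rfl
    · rfl
    ring
  have hAd : ∀ t, HasDerivAt A (-(V t 0 * L t 1 - V t 1 * L t 0)) t := fun t =>
    hKirA t ▸ (hA t).hasDerivAt
  set g : ℝ → ℝ := fun t => A t + y t 0 * f1 t - y t 1 * f0 t with hgdef
  have hg : ∀ t, HasDerivAt g 0 t := by
    intro t
    have h := ((hAd t).add ((hy0 t).mul (hf1 t))).sub ((hy1 t).mul (hf0 t))
    convert h using 1
    · rfl
    · rfl
    · rfl
    simp only [hf0def, hf1def]
    have hpy := Real.sin_sq_add_cos_sq (θ t)
    linear_combination (-(V t 0 * L t 1) + V t 1 * L t 0) * hpy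
  have hconst0 : ∀ t₁ t₂ : ℝ, f0 t₁ = f0 t₂ := fun t₁ t₂ =>
    is_const_of_deriv_eq_zero (fun t => (hf0 t).differentiableAt)
      (fun t => (hf0 t).deriv) t₁ t₂
  have hconst1 : ∀ t₁ t₂ : ℝ, f1 t₁ = f1 t₂ := fun t₁ t₂ =>
    is_const_of_deriv_eq_zero (fun t => (hf1 t).differentiableAt)
      (fun t => (hf1 t).deriv) t₁ t₂
  have hconstg : ∀ t₁ t₂ : ℝ, g t₁ = g t₂ := fun t₁ t₂ =>
    is_const_of_deriv_eq_zero (fun t => (hg t).differentiableAt)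
      (fun t => (hg t).deriv) t₁ t₂
  have hm0 : ∀ t, (rot (θ t)).mulVec (L t) 0 = f0 t := by
    intro t
    simp [rot, Matrix.mulVec, dotProduct, Fin.sum_univ_two, f0, sub_eq_add_neg]
  have hm1 : ∀ t, (rot (θ t)).mulVec (L t) 1 = f1 t := by
    intro t
    simp [rot, Matrix.mulVec, dotProduct, Fin.sum_univ_two, f1]
  intro t₁ t₂
  constructor
  · funext i
    fin_cases i
    · have h0 := hconst0 t₁ t₂
      rw [← hm0 t₁, ← hm0 t₂] at h0
      exact h0
    · have h1 := hconst1 t₁ t₂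
      rw [← hm1 t₁, ← hm1 t₂] at h1
      exact h1
  · have := hconstg t₁ t₂
    simp only [hgdef] at this
    rw [hm0 t₁, hm0 t₂, hm1 t₁, hm1 t₂]
    linarith [this]
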